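/- For quaternionic polynomials P, Q with product P·Q defined by convolution of right coefficients (X commuting with coefficients), if P(x) ≠ 0 then (P·Q)(x) = P(x) · Q(P(x)⁻¹ x P(x)), and if P(x) = 0 then (P·Q)(x) = 0. -/

import Mathlib

open Finset in
/-- Key convolution identity: the evaluation of the convolution product equals
`∑ k, x^k * P(x) * b k`. -/
theorem conv_eval_aux
    (dP dQ : ℕ) (a b : ℕ → Quaternion ℝ)
    (ha : ∀ h > dP, a h = 0) (hb : ∀ h > dQ, b h = 0)
    (x : Quaternion ℝ) :
    (∑ m ∈ Finset.range (dP + dQ + 1),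
        x ^ m * (∑ h ∈ Finset.range (m + 1), a h * b (m - h))) =
      ∑ k ∈ Finset.range (dQ + 1),
        x ^ k * (∑ h ∈ Finset.range (dP + 1), x ^ h * a h) * b k := by
  classical
  set N := dP + dQ with hN
  set f : ℕ × ℕ → Quaternion ℝ := fun p => x ^ (p.1 + p.2) * (a p.1 * b p.2) with hf
  have hdisj : (↑(Finset.range (N + 1)) : Set ℕ).PairwiseDisjoint
      (fun s => Finset.HasAntidiagonal.antidiagonal s) := by
    intro i _ j _ hij
    simp only [Finset.disjoint_left, Finset.HasAntidiagonal.mem_antidiagonal]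
    intro p hpi hpj
    exact hij (hpi.symm.trans hpj)
  have hL : (∑ m ∈ Finset.range (N + 1),
      x ^ m * (∑ h ∈ Finset.range (m + 1), a h * b (m - h))) =
      ∑ p ∈ (Finset.range (N + 1)).biUnion (fun s => Finset.HasAntidiagonal.antidiagonal s), f p := by
    rw [Finset.sum_biUnion hdisj]
    refine Finset.sum_congr rfl fun s _ => ?_
    rw [Finset.Nat.sum_antidiagonal_eq_sum_range_succ_mk, Finset.mul_sum]
    refine Finset.sum_congr rfl fun h hh => ?_
    simp only [Finset.mem_range, Nat.lt_succ_iff] at hh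
    simp only [hf, Nat.add_sub_cancel' hh]
  have hsub : Finset.range (dP + 1) ×ˢ Finset.range (dQ + 1) ⊆
      (Finset.range (N + 1)).biUnion (fun s => Finset.HasAntidiagonal.antidiagonal s) := by
    intro p hp
    simp only [Finset.mem_product, Finset.mem_range, Nat.lt_succ_iff] at hp
    simp only [Finset.mem_biUnion, Finset.mem_range, Finset.HasAntidiagonal.mem_antidiagonal]
    exact ⟨p.1 + p.2, Nat.lt_succ_of_le (Nat.add_le_add hp.1 hp.2), rfl⟩
  have hvan : ∀ p ∈ (Finset.range (N + 1)).biUnion (fun s => Finset.HasAntidiagonal.antidiagonal s),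
      p ∉ Finset.range (dP + 1) ×ˢ Finset.range (dQ + 1) → f p = 0 := by
    intro p _ hp
    simp only [Finset.mem_product, Finset.mem_range, Nat.lt_succ_iff, not_and_or,
      not_le] at hp
    rcases hp with h | h
    · simp [hf, ha p.1 h]
    · simp [hf, hb p.2 h]
  rw [hL, ← Finset.sum_subset hsub hvan, Finset.sum_product, Finset.sum_comm]
  refine Finset.sum_congr rfl fun k _ => ?_
  have hterm : ∀ h, f (h, k) = x ^ k * ((x ^ h * a h) * b k) := by
    intro h
    simp only [hf]
    rw [pow_add, pow_mul_comm]
    noncomm_ring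
  simp only [hterm]
  rw [← Finset.mul_sum, ← Finset.sum_mul, ← mul_assoc]

theorem star_product_evaluation
    (dP dQ : ℕ) (a b : ℕ → Quaternion ℝ)
    (ha : ∀ h > dP, a h = 0) (hb : ∀ h > dQ, b h = 0)
    (x : Quaternion ℝ) :
    (((∑ h ∈ Finset.range (dP + 1), x ^ h * a h) ≠ 0 →
      (∑ m ∈ Finset.range (dP + dQ + 1),
          x ^ m * (∑ h ∈ Finset.range (m + 1), a h * b (m - h))) =
        (∑ h ∈ Finset.range (dP + 1), x ^ h * a h) *
          (∑ h ∈ Finset.range (dQ + 1),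
            ((∑ h ∈ Finset.range (dP + 1), x ^ h * a h)⁻¹ * x *
              (∑ h ∈ Finset.range (dP + 1), x ^ h * a h)) ^ h * b h)) ∧
    ((∑ h ∈ Finset.range (dP + 1), x ^ h * a h) = 0 →
      (∑ m ∈ Finset.range (dP + dQ + 1),
          x ^ m * (∑ h ∈ Finset.range (m + 1), a h * b (m - h))) = 0)) := by
  have key := conv_eval_aux dP dQ a b ha hb x
  set P := ∑ h ∈ Finset.range (dP + 1), x ^ h * a h with hP
  constructor
  · intro hne
    rw [key, Finset.mul_sum]
    have hconj : ∀ k, (P⁻¹ * x * P) ^ k = P⁻¹ * x ^ k * P := by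
      intro k
      induction k with
      | zero => simp [inv_mul_cancel₀ hne]
      | succ n ih =>
        rw [pow_succ, ih, pow_succ]
        simp only [mul_assoc, mul_inv_cancel_left₀ hne]
    refine Finset.sum_congr rfl fun k _ => ?_
    rw [hconj]
    simp only [mul_assoc, mul_inv_cancel_left₀ hne]
  · intro h0
    rw [key, h0]
    simp
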